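/- PU-Prune soundness (utility part): for itemsets Y and an item z with z ≻ y for all y ∈ Y, if SUM(Y.pu) + SUM(Y.rpu) − Σ_{T∈D, Y⊆T, z∉T} (pu(Y,T) + rpu(Y,T)) < minUtil, then u(W) < minUtil for every extension W of Y∪{z} by items succeeding z in the order. -/
import Mathlib


open Finset

def utilT {α ι : Type} (pr : α → ℤ) (q : α → ι → ℕ) (X : Finset α) (t : ι) : ℤ :=
  ∑ i ∈ X, pr i * (q i t : ℤ)

def totU {α ι : Type} [DecidableEq α] (D : Finset ι) (Trans : ι → Finset α)
    (pr : α → ℤ) (q : α → ι → ℕ) (X : Finset α) : ℤ :=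
  ∑ t ∈ D.filter (fun t => X ⊆ Trans t), utilT pr q X t

def puT {α ι : Type} [DecidableEq α] (pr : α → ℤ) (q : α → ι → ℕ) (Z : Finset α) (t : ι) : ℤ :=
  ∑ i ∈ Z.filter (fun i => 0 < pr i), pr i * (q i t : ℤ)

def rpuT {α ι : Type} [DecidableEq α] [LinearOrder α] (Trans : ι → Finset α)
    (pr : α → ℤ) (q : α → ι → ℕ) (Z : Finset α) (t : ι) : ℤ :=
  ∑ i ∈ (Trans t).filter (fun i => (∀ x ∈ Z, x < i) ∧ 0 < pr i), pr i * (q i t : ℤ)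

def SUMpu {α ι : Type} [DecidableEq α] (D : Finset ι) (Trans : ι → Finset α)
    (pr : α → ℤ) (q : α → ι → ℕ) (Z : Finset α) : ℤ :=
  ∑ t ∈ D.filter (fun t => Z ⊆ Trans t), puT pr q Z t

def SUMrpu {α ι : Type} [DecidableEq α] [LinearOrder α] (D : Finset ι) (Trans : ι → Finset α)
    (pr : α → ℤ) (q : α → ι → ℕ) (Z : Finset α) : ℤ :=
  ∑ t ∈ D.filter (fun t => Z ⊆ Trans t), rpuT Trans pr q Z t

/-- PU-Prune soundness, utility part. -/
theorem stmt12 {α ι : Type} [DecidableEq α] [LinearOrder α] (D : Finset ι)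
    (Trans : ι → Finset α) (pr : α → ℤ) (q : α → ι → ℕ)
    (hord : ∀ i j : α, 0 < pr i → pr j < 0 → i < j)
    (minUtil : ℤ) (Y : Finset α) (z : α) (hz : ∀ y ∈ Y, y < z)
    (h : SUMpu D Trans pr q Y + SUMrpu D Trans pr q Y -
        (∑ t ∈ D.filter (fun t => Y ⊆ Trans t ∧ z ∉ Trans t),
          (puT pr q Y t + rpuT Trans pr q Y t)) < minUtil) :
    ∀ W : Finset α, insert z Y ⊆ W → (∀ j ∈ W \ insert z Y, z < j) →
      totU D Trans pr q W < minUtil := by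
  intro W hWsub hWext
  -- per-transaction bound
  have key : SUMpu D Trans pr q Y + SUMrpu D Trans pr q Y -
      (∑ t ∈ D.filter (fun t => Y ⊆ Trans t ∧ z ∉ Trans t),
        (puT pr q Y t + rpuT Trans pr q Y t)) =
      ∑ t ∈ D.filter (fun t => Y ⊆ Trans t ∧ z ∈ Trans t),
        (puT pr q Y t + rpuT Trans pr q Y t) := by
    unfold SUMpu SUMrpu
    rw [← Finset.sum_add_distrib]
    have hsplit := Finset.sum_filter_add_sum_filter_not
      (D.filter (fun t => Y ⊆ Trans t)) (fun t => z ∈ Trans t)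
      (fun t => puT pr q Y t + rpuT Trans pr q Y t)
    rw [Finset.filter_filter, Finset.filter_filter] at hsplit
    linarith [hsplit]
  rw [key] at h
  refine lt_of_le_of_lt ?_ h
  have hzW : z ∈ W := hWsub (Finset.mem_insert_self z Y)
  have hYW : Y ⊆ W := fun y hy => hWsub (Finset.mem_insert_of_mem hy)
  -- per transaction containing W
  have per : ∀ t, W ⊆ Trans t →
      utilT pr q W t ≤ puT pr q Y t + rpuT Trans pr q Y t := by
    intro t ht
    have step1 : utilT pr q W t ≤ ∑ i ∈ W.filter (fun i => 0 < pr i), pr i * (q i t : ℤ) := by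
      unfold utilT
      rw [← Finset.sum_filter_add_sum_filter_not W (fun i => 0 < pr i)]
      have : (∑ i ∈ W.filter (fun i => ¬ 0 < pr i), pr i * (q i t : ℤ)) ≤ 0 := by
        apply Finset.sum_nonpos
        intro i hi
        have hpr : pr i ≤ 0 := le_of_not_gt (Finset.mem_filter.mp hi).2
        exact mul_nonpos_of_nonpos_of_nonneg hpr (by positivity)
      linarith
    refine step1.trans ?_
    have hdisj : Disjoint (Y.filter (fun i => 0 < pr i))
        ((Trans t).filter (fun i => (∀ x ∈ Y, x < i) ∧ 0 < pr i)) := by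
      rw [Finset.disjoint_left]
      intro i hi hi'
      have h1 := (Finset.mem_filter.mp hi).1
      have h2 := ((Finset.mem_filter.mp hi').2).1 i h1
      exact absurd h2 (lt_irrefl i)
    have hU : puT pr q Y t + rpuT Trans pr q Y t =
        ∑ i ∈ Y.filter (fun i => 0 < pr i) ∪
          (Trans t).filter (fun i => (∀ x ∈ Y, x < i) ∧ 0 < pr i),
          pr i * (q i t : ℤ) := by
      rw [Finset.sum_union hdisj]; rfl
    rw [hU]
    apply Finset.sum_le_sum_of_subset_of_nonneg
    · intro i hi
      obtain ⟨hiW, hip⟩ := Finset.mem_filter.mp hi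
      by_cases hiY : i ∈ Y
      · exact Finset.mem_union_left _ (Finset.mem_filter.mpr ⟨hiY, hip⟩)
      · refine Finset.mem_union_right _ (Finset.mem_filter.mpr ⟨ht hiW, ?_, hip⟩)
        by_cases hiz : i = z
        · subst hiz; exact hz
        · have : i ∈ W \ insert z Y := by
            simp [Finset.mem_sdiff, hiW, hiY, hiz]
          have hzi := hWext i this
          exact fun x hx => lt_trans (hz x hx) hzi
    · intro i hi _
      have hip : 0 < pr i := by
        rcases Finset.mem_union.mp hi with h' | h'
        · exact (Finset.mem_filter.mp h').2
        · exact ((Finset.mem_filter.mp h').2).2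
      positivity
  -- combine
  unfold totU
  calc ∑ t ∈ D.filter (fun t => W ⊆ Trans t), utilT pr q W t
      ≤ ∑ t ∈ D.filter (fun t => W ⊆ Trans t),
          (puT pr q Y t + rpuT Trans pr q Y t) := by
        apply Finset.sum_le_sum
        intro t ht
        exact per t (Finset.mem_filter.mp ht).2
    _ ≤ ∑ t ∈ D.filter (fun t => Y ⊆ Trans t ∧ z ∈ Trans t),
          (puT pr q Y t + rpuT Trans pr q Y t) := by
        apply Finset.sum_le_sum_of_subset_of_nonneg
        · intro t ht
          obtain ⟨htD, htW⟩ := Finset.mem_filter.mp ht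
          exact Finset.mem_filter.mpr ⟨htD, hYW.trans htW, htW hzW⟩
        · intro t _ _
          have h1 : 0 ≤ puT pr q Y t := by
            apply Finset.sum_nonneg; intro i hi
            have := (Finset.mem_filter.mp hi).2
            positivity
          have h2 : 0 ≤ rpuT Trans pr q Y t := by
            apply Finset.sum_nonneg; intro i hi
            have := ((Finset.mem_filter.mp hi).2).2
            positivity
          linarith
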